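/- arXiv:0708.2574 — 7 statements merged into one kernel-verified Lean document; each statement's English description precedes it below -/
import Mathlib

section
/- The q-Catalan number C_n(q) = (1/[n+1]) * [2n choose n]_q is a polynomial in q of degree n(n-1) with nonnegative integer coefficients. -/
open Polynomial Finset

noncomputable def qInt (m : ℕ) : Polynomial ℝ :=
  ∑ i ∈ Finset.range m, Polynomial.X ^ i

noncomputable def qFact (m : ℕ) : Polynomial ℝ :=
  ∏ i ∈ Finset.range m, qInt (i + 1)

/-- pair of q-ballot polynomials (maj statistic), over ℕ -/
noncomputable def fp : ℕ → ℕ → Polynomial ℕ × Polynomial ℕ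
  | _, 0 => (1, 0)
  | 0, _+1 => (0, 0)
  | n+1, k+1 =>
    if k ≤ n then
      ((fp n (k+1)).1 + Polynomial.X ^ (n + k + 1) * (fp n (k+1)).2,
       (fp (n+1) k).1 + (fp (n+1) k).2)
    else (0, 0)
termination_by n k => (n, k)

noncomputable def fr0 (n k : ℕ) : Polynomial ℝ := ((fp n k).1).map (Nat.castRingHom ℝ)
noncomputable def fr1 (n k : ℕ) : Polynomial ℝ := ((fp n k).2).map (Nat.castRingHom ℝ)

lemma qInt_zero : qInt 0 = 0 := by simp [qInt]

lemma qInt_one : qInt 1 = 1 := by simp [qInt]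

lemma qInt_geom (m : ℕ) : qInt m * (X - 1) = X ^ m - 1 := geom_sum_mul X m

lemma qInt_ne_zero {m : ℕ} (h : m ≠ 0) : qInt m ≠ 0 := by
  intro h0
  have h1 : (qInt m).eval 1 = (m : ℝ) := by simp [qInt]
  rw [h0] at h1
  simp only [Polynomial.eval_zero] at h1
  exact h (by exact_mod_cast h1.symm)

lemma qFact_succ (m : ℕ) : qFact (m+1) = qFact m * qInt (m+1) := Finset.prod_range_succ _ m

lemma qFact_ne_zero (m : ℕ) : qFact m ≠ 0 := by
  induction m with
  | zero => simp [qFact]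
  | succ t ih => rw [qFact_succ]; exact mul_ne_zero ih (qInt_ne_zero (Nat.succ_ne_zero t))

lemma qInt_split (a b : ℕ) : qInt (a + b) = qInt a + X ^ a * qInt b := by
  unfold qInt
  rw [Finset.sum_range_add, Finset.mul_sum]
  congr 1
  refine Finset.sum_congr rfl fun i _ => ?_
  rw [pow_add]

lemma X_sub_one_ne_zero : (X - 1 : Polynomial ℝ) ≠ 0 := by
  intro h
  have := congrArg (Polynomial.eval 0) h
  simp at this

lemma keyA (i m : ℕ) :
    qInt m * qInt (i+m+2) + X^m * qInt (i+1) + X^(i+m+1) * (qInt (i+1) * qInt (m+1)) =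
      qInt (m+1) * qInt (2*i+m+2) := by
  apply mul_right_cancel₀ (mul_ne_zero X_sub_one_ne_zero X_sub_one_ne_zero)
  have e : ∀ a : ℕ, qInt a * (X - 1 : Polynomial ℝ) = X ^ a - 1 := qInt_geom
  have h1 : (qInt m * qInt (i+m+2) + X^m * qInt (i+1) + X^(i+m+1) * (qInt (i+1) * qInt (m+1)))
      * ((X - 1) * (X - 1)) =
      (X^m - 1) * (X^(i+m+2) - 1) + X^m * ((X^(i+1) - 1) * (X - 1))
        + X^(i+m+1) * ((X^(i+1) - 1) * (X^(m+1) - 1)) := by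
    calc (qInt m * qInt (i+m+2) + X^m * qInt (i+1) + X^(i+m+1) * (qInt (i+1) * qInt (m+1)))
        * ((X - 1) * (X - 1))
        = (qInt m * (X-1)) * (qInt (i+m+2) * (X-1)) + X^m * ((qInt (i+1) * (X-1)) * (X - 1))
          + X^(i+m+1) * ((qInt (i+1) * (X-1)) * (qInt (m+1) * (X-1))) := by ring
      _ = _ := by simp only [e]
  have h2 : (qInt (m+1) * qInt (2*i+m+2)) * ((X - 1) * (X - 1)) =
      (X^(m+1) - 1) * (X^(2*i+m+2) - 1) := by
    calc (qInt (m+1) * qInt (2*i+m+2)) * ((X - 1) * (X - 1))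
        = (qInt (m+1) * (X-1)) * (qInt (2*i+m+2) * (X-1)) := by ring
      _ = _ := by simp only [e]
  rw [h1, h2]; ring

lemma keyB (i j : ℕ) :
    X^(2*i) * (qInt (i+j+2) * qInt (j+1)) + qInt i + X^i * (qInt i * qInt (j+2)) =
      (1 + X^(i+1) * qInt (j+1)) * qInt (2*i+j+1) := by
  apply mul_right_cancel₀ (mul_ne_zero X_sub_one_ne_zero X_sub_one_ne_zero)
  have e : ∀ a : ℕ, qInt a * (X - 1 : Polynomial ℝ) = X ^ a - 1 := qInt_geom
  have h1 : (X^(2*i) * (qInt (i+j+2) * qInt (j+1)) + qInt i + X^i * (qInt i * qInt (j+2)))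
      * ((X - 1) * (X - 1)) =
      X^(2*i) * ((X^(i+j+2) - 1) * (X^(j+1) - 1)) + (X^i - 1) * (X - 1)
        + X^i * ((X^i - 1) * (X^(j+2) - 1)) := by
    calc (X^(2*i) * (qInt (i+j+2) * qInt (j+1)) + qInt i + X^i * (qInt i * qInt (j+2)))
        * ((X - 1) * (X - 1))
        = X^(2*i) * ((qInt (i+j+2) * (X-1)) * (qInt (j+1) * (X-1)))
          + (qInt i * (X-1)) * (X - 1)
          + X^i * ((qInt i * (X-1)) * (qInt (j+2) * (X-1))) := by ring
      _ = _ := by simp only [e]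
  have h2 : ((1 + X^(i+1) * qInt (j+1)) * qInt (2*i+j+1)) * ((X - 1) * (X - 1)) =
      ((X - 1) + X^(i+1) * (X^(j+1) - 1)) * (X^(2*i+j+1) - 1) := by
    calc ((1 + X^(i+1) * qInt (j+1)) * qInt (2*i+j+1)) * ((X - 1) * (X - 1))
        = ((X - 1) + X^(i+1) * (qInt (j+1) * (X-1))) * (qInt (2*i+j+1) * (X-1)) := by ring
      _ = _ := by simp only [e]
  rw [h1, h2]; ring

lemma fp_zero_right (n : ℕ) : fp n 0 = (1, 0) := by
  cases n <;> rw [fp]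

lemma fp_high {n k : ℕ} (h : n < k) : fp n k = (0, 0) := by
  match n, k with
  | n, 0 => omega
  | 0, k+1 => rw [fp]
  | n+1, k+1 => rw [fp, if_neg (by omega : ¬ k ≤ n)]

lemma fr0_zero_right (n : ℕ) : fr0 n 0 = 1 := by simp [fr0, fp_zero_right]

lemma fr1_zero_right (n : ℕ) : fr1 n 0 = 0 := by simp [fr1, fp_zero_right]

lemma fr0_high {n k : ℕ} (h : n < k) : fr0 n k = 0 := by simp [fr0, fp_high h]

lemma fr1_high {n k : ℕ} (h : n < k) : fr1 n k = 0 := by simp [fr1, fp_high h]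

lemma fr0_rec (n k : ℕ) (h : k ≤ n) :
    fr0 (n+1) (k+1) = fr0 n (k+1) + X^(n+k+1) * fr1 n (k+1) := by
  unfold fr0 fr1
  rw [fp, if_pos h]
  simp [Polynomial.map_add, Polynomial.map_mul, Polynomial.map_pow]

lemma fr1_rec (n k : ℕ) (h : k ≤ n) :
    fr1 (n+1) (k+1) = fr0 (n+1) k + fr1 (n+1) k := by
  unfold fr0 fr1
  rw [fp, if_pos h]
  simp [Polynomial.map_add]

def StA (k j : ℕ) : Prop :=
  qInt (2*k+j) * (qFact k * qFact (k+j+1) * fr0 (k+j) k) =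
    X^(2*k) * (qInt (k+j+1) * (qInt j * qFact (2*k+j)))

def StB (k j : ℕ) : Prop :=
  qInt (2*k+j) * (qFact k * qFact (k+j+1) * fr1 (k+j) k) =
    qInt k * ((1 + X^k * qInt (j+1)) * qFact (2*k+j))

lemma stepB (i j : ℕ) (hA : StA i (j+1)) (hB : StB i (j+1)) : StB (i+1) j := by
  unfold StA at hA
  unfold StB at hB ⊢
  rw [show 2*i+(j+1) = 2*i+j+1 by omega, show i+(j+1) = i+j+1 by omega,
    show i+j+1+1 = i+j+2 by omega] at hA hB
  rw [show (j+1)+1 = j+2 by omega] at hB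
  rw [show 2*(i+1)+j = 2*i+j+2 by omega, show (i+1)+j = i+j+1 by omega,
    show i+j+1+1 = i+j+2 by omega]
  rw [fr1_rec (i+j) i (Nat.le_add_right i j)]
  have hF1 : qFact (i+1) = qFact i * qInt (i+1) := qFact_succ i
  have hF2 : qFact (2*i+j+2) = qFact (2*i+j+1) * qInt (2*i+j+2) := by
    have := qFact_succ (2*i+j+1); rwa [show 2*i+j+1+1 = 2*i+j+2 by omega] at this
  apply mul_left_cancel₀ (qInt_ne_zero (show 2*i+j+1 ≠ 0 by omega))
  linear_combination (qInt (2*i+j+2) * qInt (i+1)) * hA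
    + (qInt (2*i+j+2) * qInt (i+1)) * hB
    + (qInt (2*i+j+2) * qInt (i+1) * qFact (2*i+j+1)) * keyB i j
    + (qInt (2*i+j+1) * qInt (2*i+j+2) * qFact (i+j+2)
        * (fr0 (i+j+1) i + fr1 (i+j+1) i)) * hF1
    + (-(qInt (2*i+j+1) * qInt (i+1) * (1 + X^(i+1) * qInt (j+1)))) * hF2

lemma stepA (i m : ℕ) (hA : StA (i+1) m) (hB : StB (i+1) m) : StA (i+1) (m+1) := by
  unfold StA at hA ⊢
  unfold StB at hB
  simp only [show 2*(i+1)+m = 2*i+m+2 from by omega, show 2*i+2+m = 2*i+m+2 from by omega,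
    show 2*(i+1)+(m+1) = 2*i+m+3 from by omega, show 2*i+2+(m+1) = 2*i+m+3 from by omega,
    show 2*i+m+2+1 = 2*i+m+3 from by omega, show (i+1)+m = i+m+1 from by omega,
    show (i+1)+(m+1) = i+m+2 from by omega, show i+m+1+1 = i+m+2 from by omega,
    show i+m+2+1 = i+m+3 from by omega, show 2*(i+1) = 2*i+2 from by omega] at hA hB
  simp only [show 2*(i+1)+m = 2*i+m+2 from by omega, show 2*i+2+m = 2*i+m+2 from by omega,
    show 2*(i+1)+(m+1) = 2*i+m+3 from by omega, show 2*i+2+(m+1) = 2*i+m+3 from by omega,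
    show 2*i+m+2+1 = 2*i+m+3 from by omega, show (i+1)+m = i+m+1 from by omega,
    show (i+1)+(m+1) = i+m+2 from by omega, show i+m+1+1 = i+m+2 from by omega,
    show i+m+2+1 = i+m+3 from by omega, show 2*(i+1) = 2*i+2 from by omega]
  rw [show fr0 (i+m+2) (i+1) = fr0 (i+m+1) (i+1) + X^(2*i+m+2) * fr1 (i+m+1) (i+1) by
    have := fr0_rec (i+m+1) i (by omega)
    rwa [show (i+m+1)+1 = i+m+2 by omega, show (i+m+1)+i+1 = 2*i+m+2 by omega] at this]
  have hF1 : qFact (i+m+3) = qFact (i+m+2) * qInt (i+m+3) := by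
    have := qFact_succ (i+m+2); rwa [show i+m+2+1 = i+m+3 by omega] at this
  have hF2 : qFact (2*i+m+3) = qFact (2*i+m+2) * qInt (2*i+m+3) := by
    have := qFact_succ (2*i+m+2); rwa [show 2*i+m+2+1 = 2*i+m+3 by omega] at this
  apply mul_left_cancel₀ (qInt_ne_zero (show 2*i+m+2 ≠ 0 by omega))
  linear_combination (qInt (2*i+m+3) * qInt (i+m+3)) * hA
    + (qInt (2*i+m+3) * qInt (i+m+3) * X^(2*i+m+2)) * hB
    + (qInt (2*i+m+3) * qInt (i+m+3) * qFact (2*i+m+2) * X^(2*i+2)) * keyA i m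
    + (qInt (2*i+m+2) * qInt (2*i+m+3) * qFact (i+1)
        * (fr0 (i+m+1) (i+1) + X^(2*i+m+2) * fr1 (i+m+1) (i+1))) * hF1
    + (-(qInt (2*i+m+2) * X^(2*i+2) * qInt (i+m+3) * qInt (m+1))) * hF2

lemma baseA (i : ℕ) : StA (i+1) 0 := by
  unfold StA
  rw [show (i+1)+0 = i+1 by omega]
  rw [show fr0 (i+1) (i+1) = fr0 i (i+1) + X^(i+i+1) * fr1 i (i+1) from fr0_rec i i le_rfl]
  rw [fr0_high (Nat.lt_succ_self i), fr1_high (Nat.lt_succ_self i)]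
  simp [qInt_zero]

lemma star : ∀ k j : ℕ, StA k j ∧ StB k j := by
  intro k
  induction k with
  | zero =>
    intro j
    constructor
    · unfold StA
      simp only [Nat.zero_add, Nat.mul_zero, Nat.zero_mul, pow_zero]
      rw [fr0_zero_right, qFact_succ]
      simp only [qFact, Finset.range_zero, Finset.prod_empty]
      ring
    · unfold StB
      rw [show 0+j = j by omega]
      rw [fr1_zero_right, qInt_zero]
      ring
  | succ i ih =>
    have hBall : ∀ j, StB (i+1) j := fun j => stepB i j (ih (j+1)).1 (ih (j+1)).2
    have hAall : ∀ j, StA (i+1) j := by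
      intro j
      induction j with
      | zero => exact baseA i
      | succ m ihm => exact stepA i m ihm (hBall m)
    exact fun j => ⟨hAall j, hBall j⟩

lemma qInt_natDegree (m : ℕ) : (qInt (m+1)).natDegree = m := by
  apply le_antisymm
  · apply Polynomial.natDegree_sum_le_of_forall_le
    intro i hi
    simp only [Finset.mem_range] at hi
    calc (X ^ i : Polynomial ℝ).natDegree ≤ i := by simp
      _ ≤ m := by omega
  · apply Polynomial.le_natDegree_of_ne_zero
    have : (qInt (m+1)).coeff m = 1 := by
      unfold qInt
      rw [Polynomial.finset_sum_coeff]
      simp [Polynomial.coeff_X_pow]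
    rw [this]; exact one_ne_zero

lemma qFact_natDegree (m : ℕ) : (qFact m).natDegree = ∑ i ∈ Finset.range m, i := by
  induction m with
  | zero => simp [qFact]
  | succ t ih =>
    rw [qFact_succ, Polynomial.natDegree_mul (qFact_ne_zero t) (qInt_ne_zero (Nat.succ_ne_zero t)),
      ih, qInt_natDegree, Finset.sum_range_succ]

/-- The q-Catalan number $C_n(q) = [2n choose n]_q / [n+1]_q$ is a polynomial in $q$
of degree $n(n-1)$ with nonnegative integer coefficients. -/
theorem qCatalan_polynomial_nonneg_int_coeffs (n : ℕ) (hn : 1 ≤ n) :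
    ∃ P : Polynomial ℝ,
      qFact n ^ 2 * qInt (n + 1) * P = qFact (2 * n) ∧
      P.natDegree = n * (n - 1) ∧
      ∀ k : ℕ, ∃ c : ℕ, P.coeff k = (c : ℝ) := by
  obtain ⟨hA, hB⟩ := star n 0
  unfold StA at hA
  unfold StB at hB
  rw [show 2*n+0 = 2*n by omega, show n+0+1 = n+1 by omega, show n+0 = n by omega,
    qInt_zero] at hA
  rw [show 2*n+0 = 2*n by omega, show n+0+1 = n+1 by omega, show n+0 = n by omega,
    show (0:ℕ)+1 = 1 by omega, qInt_one] at hB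
  have hsplit : qInt n * (1 + X^n * 1) = qInt (2*n) := by
    rw [two_mul, qInt_split n n]; ring
  have hFsucc : qFact (n+1) = qFact n * qInt (n+1) := qFact_succ n
  have hmain : qFact n ^ 2 * qInt (n + 1) * (fr0 n n + fr1 n n) = qFact (2 * n) := by
    apply mul_left_cancel₀ (qInt_ne_zero (show 2*n ≠ 0 by omega))
    linear_combination hA + hB + qFact (2*n) * hsplit
      + (-(qInt (2*n) * qFact n * (fr0 n n + fr1 n n))) * hFsucc
  refine ⟨fr0 n n + fr1 n n, hmain, ?_, ?_⟩
  · have hPne : fr0 n n + fr1 n n ≠ 0 := by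
      intro h0
      apply qFact_ne_zero (2*n)
      rw [← hmain, h0, mul_zero]
    have hdeg := congrArg Polynomial.natDegree hmain
    rw [Polynomial.natDegree_mul (mul_ne_zero (pow_ne_zero 2 (qFact_ne_zero n))
        (qInt_ne_zero (Nat.succ_ne_zero n))) hPne,
      Polynomial.natDegree_mul (pow_ne_zero 2 (qFact_ne_zero n))
        (qInt_ne_zero (Nat.succ_ne_zero n)),
      Polynomial.natDegree_pow, qFact_natDegree, qInt_natDegree, qFact_natDegree] at hdeg
    obtain ⟨t, rfl⟩ : ∃ t, n = t + 1 := ⟨n - 1, by omega⟩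
    have g1 := Finset.sum_range_id_mul_two (t+1)
    have g2 := Finset.sum_range_id_mul_two (2*(t+1))
    rw [show 2*(t+1) - 1 = 2*t+1 by omega] at g2
    rw [show (t+1) - 1 = t by omega] at g1 ⊢
    nlinarith [hdeg, g1, g2]
  · intro k
    refine ⟨((fp n n).1 + (fp n n).2).coeff k, ?_⟩
    unfold fr0 fr1
    simp [Polynomial.coeff_map]
end

section
/- The second derivative of the q-Catalan polynomial at q = 1 satisfies C_n''(1) = (1/12) n(n-1)(3n² - n - 4) · C_n, where C_n is the n-th Catalan number. -/
open Polynomial Finset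

lemma qInt_eval_one (m : ℕ) : (qInt m).eval 1 = (m : ℝ) := by
  induction m with
  | zero => simp [qInt]
  | succ k ih =>
    simp only [qInt, Finset.sum_range_succ, eval_add, eval_pow, eval_X] at *
    rw [ih]; push_cast; ring

lemma qInt_deriv_eval_one (m : ℕ) :
    (Polynomial.derivative (qInt m)).eval 1 = (m : ℝ) * ((m : ℝ) - 1) / 2 := by
  induction m with
  | zero => simp [qInt]
  | succ k ih =>
    simp only [qInt, Finset.sum_range_succ, derivative_add, eval_add] at *
    rw [ih, derivative_X_pow]
    simp only [eval_mul, eval_C, eval_pow, eval_X, one_pow, mul_one]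
    push_cast; ring

lemma qInt_deriv2_eval_one (m : ℕ) :
    (Polynomial.derivative (Polynomial.derivative (qInt m))).eval 1
      = (m : ℝ) * ((m : ℝ) - 1) * ((m : ℝ) - 2) / 3 := by
  induction m with
  | zero => simp [qInt]
  | succ k ih =>
    simp only [qInt, Finset.sum_range_succ, derivative_add, eval_add] at *
    rw [ih, derivative_X_pow, derivative_mul, derivative_C, derivative_X_pow]
    simp only [eval_add, eval_mul, eval_C, eval_pow, eval_X, one_pow, mul_one, zero_mul,
      eval_zero, zero_add]
    rcases k with _ | j
    · norm_num
    · simp only [Nat.add_sub_cancel]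
      push_cast; ring

lemma qFact_eval_one_pos (m : ℕ) : 0 < (qFact m).eval 1 := by
  induction m with
  | zero => simp [qFact]
  | succ k ih =>
    rw [qFact, Finset.prod_range_succ, eval_mul]
    have : (qInt (k + 1)).eval 1 = ((k : ℝ) + 1) := by rw [qInt_eval_one]; push_cast; ring
    rw [this]
    show 0 < (qFact k).eval 1 * _
    positivity

lemma qFact_deriv_eval_one (m : ℕ) :
    (Polynomial.derivative (qFact m)).eval 1
      = (qFact m).eval 1 * ((m : ℝ) * ((m : ℝ) - 1) / 4) := by
  induction m with
  | zero => simp [qFact]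
  | succ k ih =>
    have hstep : qFact (k + 1) = qFact k * qInt (k + 1) := by
      rw [qFact, Finset.prod_range_succ]; rfl
    rw [hstep, derivative_mul, eval_add, eval_mul, eval_mul, ih, qInt_eval_one,
      qInt_deriv_eval_one, eval_mul, qInt_eval_one]
    push_cast; ring

lemma qFact_deriv2_eval_one (m : ℕ) :
    (Polynomial.derivative (Polynomial.derivative (qFact m))).eval 1
      = (qFact m).eval 1
        * ((m : ℝ) * ((m : ℝ) - 1) * (9 * (m : ℝ) ^ 2 - 5 * (m : ℝ) - 26) / 144) := by
  induction m with
  | zero => simp [qFact]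
  | succ k ih =>
    have hstep : qFact (k + 1) = qFact k * qInt (k + 1) := by
      rw [qFact, Finset.prod_range_succ]; rfl
    rw [hstep, derivative_mul, derivative_add, derivative_mul, derivative_mul]
    simp only [eval_add, eval_mul]
    rw [ih, qFact_deriv_eval_one, qInt_eval_one, qInt_deriv_eval_one, qInt_deriv2_eval_one]
    push_cast; ring

/-- $C_n''(1) = \frac{1}{12} n(n-1)(3n^2-n-4) C_n$. -/
theorem qCatalan_second_derivative_at_one (n : ℕ) (hn : 1 ≤ n) (P : Polynomial ℝ)
    (hP : qFact n ^ 2 * qInt (n + 1) * P = qFact (2 * n)) :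
    (Polynomial.derivative (Polynomial.derivative P)).eval 1
      = (1 / 12 : ℝ) * (n : ℝ) * ((n : ℝ) - 1) * (3 * (n : ℝ) ^ 2 - (n : ℝ) - 4) * P.eval 1 := by
  have h0 := congrArg (Polynomial.eval (1 : ℝ)) hP
  have h1 := congrArg (Polynomial.eval (1 : ℝ)) (congrArg Polynomial.derivative hP)
  have h2 := congrArg (Polynomial.eval (1 : ℝ))
    (congrArg Polynomial.derivative (congrArg Polynomial.derivative hP))
  simp only [derivative_mul, derivative_pow, derivative_add, derivative_C,
    eval_add, eval_mul, eval_pow, eval_C, zero_mul, eval_zero, zero_add, add_zero,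
    qInt_eval_one, qInt_deriv_eval_one, qInt_deriv2_eval_one,
    qFact_deriv_eval_one, qFact_deriv2_eval_one] at h0 h1 h2
  push_cast at h0 h1 h2
  have hf : (0:ℝ) < (qFact n).eval 1 := qFact_eval_one_pos n
  have hne : ((qFact n).eval 1) ^ 2 * ((n : ℝ) + 1) ^ 2 ≠ 0 := by positivity
  apply mul_left_cancel₀ hne
  linear_combination ((n:ℝ) + 1) * h2 - ((n:ℝ)^2 * ((n:ℝ)+1)) * h1
    + ((n:ℝ) * ((n:ℝ)+1) * (2*(n:ℝ)-1) * (5*(n:ℝ)+13) / 36) * h0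
end

section
/- For all sufficiently large n and all k ≥ 2, with σ² = (n³ - n)/6, one has σ^{-2k} · Σ_{i=2}^{n} ((n+i)^{2k} - i^{2k}) < 64^{2k} · n^{1-k}. -/
open Finset

/-- For all sufficiently large $n$ and all $k ≥ 2$, with $σ^2 = (n^3-n)/6$,
$σ^{-2k} Σ_{i=2}^{n} ((n+i)^{2k} - i^{2k}) < 64^{2k} n^{1-k}$. -/
theorem sigma_normalized_sum_bound :
    ∃ N : ℕ, ∀ n : ℕ, N ≤ n → ∀ k : ℕ, 2 ≤ k →
      ((((n : ℝ) ^ 3 - (n : ℝ)) / 6)⁻¹) ^ k *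
          ∑ i ∈ Finset.Icc 2 n, (((n : ℝ) + (i : ℝ)) ^ (2 * k) - (i : ℝ) ^ (2 * k))
        < 64 ^ (2 * k) * (n : ℝ) ^ ((1 : ℤ) - (k : ℤ)) := by
  refine ⟨2, fun n hn k hk => ?_⟩
  have hn2 : (2 : ℝ) ≤ (n : ℝ) := by exact_mod_cast hn
  have hn0 : (0 : ℝ) < n := by linarith
  have hn0' : (n : ℝ) ≠ 0 := ne_of_gt hn0
  have hsq : (4 : ℝ) ≤ (n : ℝ) ^ 2 := by nlinarith
  have hσ : (n : ℝ) ^ 3 / 8 ≤ ((n : ℝ) ^ 3 - n) / 6 := by nlinarith [mul_le_mul_of_nonneg_left hsq hn0.le]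
  have hpos : (0 : ℝ) < (n : ℝ) ^ 3 / 8 := by positivity
  have hinv : (((n : ℝ) ^ 3 - (n : ℝ)) / 6)⁻¹ ≤ 8 / (n : ℝ) ^ 3 := by
    calc (((n : ℝ) ^ 3 - (n : ℝ)) / 6)⁻¹ ≤ ((n : ℝ) ^ 3 / 8)⁻¹ :=
          inv_anti₀ hpos hσ
      _ = 8 / (n : ℝ) ^ 3 := by rw [inv_div]
  have hinvnn : (0 : ℝ) ≤ (((n : ℝ) ^ 3 - (n : ℝ)) / 6)⁻¹ :=
    inv_nonneg.mpr (le_of_lt (lt_of_lt_of_le hpos hσ))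
  -- bound on each summand
  have hterm : ∀ i ∈ Finset.Icc 2 n,
      ((n : ℝ) + (i : ℝ)) ^ (2 * k) - (i : ℝ) ^ (2 * k) ≤ (2 * (n : ℝ)) ^ (2 * k) := by
    intro i hi
    have hi' : (i : ℝ) ≤ n := by exact_mod_cast (Finset.mem_Icc.mp hi).2
    have hinn : (0 : ℝ) ≤ i := Nat.cast_nonneg i
    have h1 : ((n : ℝ) + i) ^ (2 * k) ≤ (2 * (n : ℝ)) ^ (2 * k) :=
      pow_le_pow_left₀ (by linarith) (by linarith) _
    have h2 : (0 : ℝ) ≤ (i : ℝ) ^ (2 * k) := by positivity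
    linarith
  have hsum : ∑ i ∈ Finset.Icc 2 n, (((n : ℝ) + (i : ℝ)) ^ (2 * k) - (i : ℝ) ^ (2 * k))
      ≤ (n : ℝ) * (2 * (n : ℝ)) ^ (2 * k) := by
    calc ∑ i ∈ Finset.Icc 2 n, (((n : ℝ) + (i : ℝ)) ^ (2 * k) - (i : ℝ) ^ (2 * k))
        ≤ ∑ _i ∈ Finset.Icc 2 n, (2 * (n : ℝ)) ^ (2 * k) := Finset.sum_le_sum hterm
      _ = ((Finset.Icc 2 n).card : ℝ) * (2 * (n : ℝ)) ^ (2 * k) := by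
          rw [Finset.sum_const, nsmul_eq_mul]
      _ ≤ (n : ℝ) * (2 * (n : ℝ)) ^ (2 * k) := by
          have hcard : ((Finset.Icc 2 n).card : ℝ) ≤ n := by
            rw [Nat.card_Icc]
            have : n + 1 - 2 ≤ n := by omega
            exact_mod_cast this
          have hp : (0 : ℝ) ≤ (2 * (n : ℝ)) ^ (2 * k) := by positivity
          exact mul_le_mul_of_nonneg_right hcard hp
  have hsumnn : (0 : ℝ) ≤ ∑ i ∈ Finset.Icc 2 n,
      (((n : ℝ) + (i : ℝ)) ^ (2 * k) - (i : ℝ) ^ (2 * k)) := by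
    apply Finset.sum_nonneg
    intro i hi
    have hinn : (0 : ℝ) ≤ i := Nat.cast_nonneg i
    have : (i : ℝ) ^ (2 * k) ≤ ((n : ℝ) + i) ^ (2 * k) :=
      pow_le_pow_left₀ hinn (by linarith) _
    linarith
  have hpowk : ((((n : ℝ) ^ 3 - (n : ℝ)) / 6)⁻¹) ^ k ≤ (8 / (n : ℝ) ^ 3) ^ k :=
    pow_le_pow_left₀ hinvnn hinv k
  have hmain : ((((n : ℝ) ^ 3 - (n : ℝ)) / 6)⁻¹) ^ k *
      ∑ i ∈ Finset.Icc 2 n, (((n : ℝ) + (i : ℝ)) ^ (2 * k) - (i : ℝ) ^ (2 * k))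
      ≤ (8 / (n : ℝ) ^ 3) ^ k * ((n : ℝ) * (2 * (n : ℝ)) ^ (2 * k)) := by
    apply mul_le_mul hpowk hsum hsumnn
    positivity
  have hzpow : (n : ℝ) ^ ((1 : ℤ) - (k : ℤ)) = (n : ℝ) / (n : ℝ) ^ k := by
    rw [zpow_sub₀ hn0', zpow_one, zpow_natCast]
  have heq : (8 / (n : ℝ) ^ 3) ^ k * ((n : ℝ) * (2 * (n : ℝ)) ^ (2 * k))
      = 32 ^ k * ((n : ℝ) / (n : ℝ) ^ k) := by
    rw [div_pow, mul_pow, pow_mul, pow_mul, ← pow_mul]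
    field_simp
    rw [show (32:ℝ)^k = 8^k * 4^k by rw [← mul_pow]; norm_num]
    ring
  have hlt : (32 : ℝ) ^ k * ((n : ℝ) / (n : ℝ) ^ k)
      < 64 ^ (2 * k) * ((n : ℝ) / (n : ℝ) ^ k) := by
    have hX : (0 : ℝ) < (n : ℝ) / (n : ℝ) ^ k := by positivity
    have h64 : (64 : ℝ) ^ (2 * k) = 4096 ^ k := by
      rw [pow_mul]; norm_num
    rw [h64]
    have : (32 : ℝ) ^ k < 4096 ^ k := by
      apply pow_lt_pow_left₀ (by norm_num) (by norm_num)
      omega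
    exact mul_lt_mul_of_pos_right this hX
  calc ((((n : ℝ) ^ 3 - (n : ℝ)) / 6)⁻¹) ^ k *
        ∑ i ∈ Finset.Icc 2 n, (((n : ℝ) + (i : ℝ)) ^ (2 * k) - (i : ℝ) ^ (2 * k))
      ≤ (8 / (n : ℝ) ^ 3) ^ k * ((n : ℝ) * (2 * (n : ℝ)) ^ (2 * k)) := hmain
    _ = 32 ^ k * ((n : ℝ) / (n : ℝ) ^ k) := heq
    _ < 64 ^ (2 * k) * ((n : ℝ) / (n : ℝ) ^ k) := hlt
    _ = 64 ^ (2 * k) * (n : ℝ) ^ ((1 : ℤ) - (k : ℤ)) := by rw [hzpow]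
end

section
/- As n → ∞, the sum Σ_{k≥2} B_{2k} · t^{2k}/(2k·(2k)!·σ^{2k}) · Σ_{i=2}^{n} ((n+i)^{2k} - i^{2k}) converges to 0 uniformly for t in any bounded set, where B_{2k} are the Bernoulli numbers and σ² = n(n-1)(n+1)/6. -/
open Finset

open Real in

lemma bernoulli_abs_bound (m : ℕ) (hm : m ≠ 0) :
    |(bernoulli (2 * m) : ℝ)| ≤ 4 * (Nat.factorial (2 * m)) / 36 ^ m := by
  have hs := hasSum_zeta_nat hm
  set S : ℝ := (-1 : ℝ) ^ (m + 1) * (2 : ℝ) ^ (2 * m - 1) * π ^ (2 * m) *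
      bernoulli (2 * m) / ((2 * m).factorial : ℝ) with hSdef
  have hS0 : 0 ≤ S := hasSum_le (fun i => by positivity) hasSum_zero hs
  have hS2 : S ≤ 2 := by
    have h1 : S ≤ π ^ 2 / 6 := by
      refine hasSum_le (fun i => ?_) hs hasSum_zeta_two
      rcases Nat.eq_zero_or_pos i with rfl | hi
      · simp [zero_pow, Nat.mul_ne_zero two_ne_zero hm]
      · have h1i : (1 : ℝ) ≤ i := by exact_mod_cast hi
        have : (i : ℝ) ^ 2 ≤ (i : ℝ) ^ (2 * m) :=
          pow_le_pow_right₀ h1i (by omega)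
        apply one_div_le_one_div_of_le (by positivity) this
    nlinarith [pi_lt_d2, pi_gt_three]
  have habs : |S| = (2 : ℝ) ^ (2 * m - 1) * π ^ (2 * m) * |(bernoulli (2 * m) : ℝ)|
      / ((2 * m).factorial : ℝ) := by
    rw [hSdef, abs_div, abs_mul, abs_mul, abs_mul]
    rw [abs_pow, abs_neg, abs_one, one_pow, one_mul,
      abs_of_nonneg (by positivity : (0:ℝ) ≤ (2:ℝ)^(2*m-1)),
      abs_of_nonneg (by positivity : (0:ℝ) ≤ π^(2*m)),
      Nat.abs_cast]
  rw [abs_of_nonneg hS0] at habs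
  -- |B| = S * (2m)! / (2^(2m-1) π^(2m)) ≤ 2 (2m)! / (2^(2m-1) π^(2m)) ≤ 4 (2m)!/36^m
  have hfac : (0:ℝ) < ((2 * m).factorial : ℝ) := by exact_mod_cast (2*m).factorial_pos
  have hden : (0:ℝ) < (2 : ℝ) ^ (2 * m - 1) * π ^ (2 * m) := by positivity
  have hB : |(bernoulli (2 * m) : ℝ)| =
      S * ((2 * m).factorial : ℝ) / ((2 : ℝ) ^ (2 * m - 1) * π ^ (2 * m)) := by
    field_simp at habs ⊢
    linarith [habs]
  rw [hB]
  have h36 : (36 : ℝ) ^ m ≤ (2 : ℝ) ^ (2 * m - 1) * π ^ (2 * m) * 2 := by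
    have h2 : (2 : ℝ) ^ (2 * m - 1) * 2 = 2 ^ (2 * m) := by
      rw [← pow_succ]
      congr 1
      omega
    have : (36 : ℝ) ^ m ≤ (2 * π) ^ (2 * m) := by
      rw [pow_mul, mul_pow]
      apply pow_le_pow_left₀ (by norm_num)
      nlinarith [pi_gt_three]
    calc (36:ℝ)^m ≤ (2*π)^(2*m) := this
      _ = 2 ^ (2*m) * π ^ (2*m) := by rw [mul_pow]
      _ = (2:ℝ)^(2*m-1) * π^(2*m) * 2 := by rw [← h2]; ring
  rw [div_le_div_iff₀ hden (by positivity)]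
  have hSne : S * ((2*m).factorial : ℝ) * 36 ^ m ≤ 2 * ((2*m).factorial:ℝ) * ((2:ℝ)^(2*m-1) * π^(2*m) * 2) := by
    have := mul_le_mul hS2 h36 (by positivity) (by norm_num)
    nlinarith [hfac]
  nlinarith [hSne]

open Real in
lemma term_bound (C : ℝ) (hC : 0 < C) (n : ℕ) (hn : 2 ≤ n) (t : ℝ) (ht : |t| ≤ C) (k : ℕ) :
    |(bernoulli (2 * (k + 2)) : ℝ) * t ^ (2 * (k + 2)) /
        ((2 * (k + 2) : ℕ) * (Nat.factorial (2 * (k + 2))) *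
          Real.sqrt ((n : ℝ) * ((n : ℝ) - 1) * ((n : ℝ) + 1) / 6) ^ (2 * (k + 2))) *
      ∑ i ∈ Finset.Icc 2 n,
        (((n : ℝ) + (i : ℝ)) ^ (2 * (k + 2)) - (i : ℝ) ^ (2 * (k + 2)))|
    ≤ 4 * n * (4 * C ^ 2 / (3 * n)) ^ (k + 2) := by
  set m := k + 2 with hm
  have hnR : (2 : ℝ) ≤ n := by exact_mod_cast hn
  have hnpos : (0 : ℝ) < n := by linarith
  set v : ℝ := (n : ℝ) * ((n : ℝ) - 1) * ((n : ℝ) + 1) / 6 with hv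
  have hvlb : (n : ℝ) ^ 3 / 12 ≤ v := by
    rw [hv]; nlinarith [hnR, hnpos, sq_nonneg ((n:ℝ)-2)]
  have hv0 : 0 < v := lt_of_lt_of_le (by positivity) hvlb
  have hσ : Real.sqrt v ^ (2 * m) = v ^ m := by
    rw [pow_mul, Real.sq_sqrt hv0.le]
  have hfacpos : (0 : ℝ) < ((2 * m).factorial : ℝ) := by
    exact_mod_cast (2 * m).factorial_pos
  have hS0 : 0 ≤ ∑ i ∈ Finset.Icc 2 n,
      (((n : ℝ) + (i : ℝ)) ^ (2 * m) - (i : ℝ) ^ (2 * m)) := by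
    refine Finset.sum_nonneg fun i _ => sub_nonneg.mpr ?_
    exact pow_le_pow_left₀ (by positivity) (by linarith [Nat.cast_nonneg (α := ℝ) i]) _
  have hSle : ∑ i ∈ Finset.Icc 2 n,
      (((n : ℝ) + (i : ℝ)) ^ (2 * m) - (i : ℝ) ^ (2 * m))
      ≤ (n : ℝ) * (2 * n) ^ (2 * m) := by
    calc ∑ i ∈ Finset.Icc 2 n, (((n : ℝ) + (i : ℝ)) ^ (2 * m) - (i : ℝ) ^ (2 * m))
        ≤ ∑ i ∈ Finset.Icc 2 n, (2 * (n : ℝ)) ^ (2 * m) := by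
          refine Finset.sum_le_sum fun i hi => ?_
          have hi' : (i : ℝ) ≤ n := by
            exact_mod_cast (Finset.mem_Icc.mp hi).2
          have : ((n : ℝ) + i) ^ (2 * m) ≤ (2 * (n : ℝ)) ^ (2 * m) :=
            pow_le_pow_left₀ (by positivity) (by linarith) _
          have h2 : (0:ℝ) ≤ (i : ℝ) ^ (2 * m) := by positivity
          linarith
      _ = ((n - 1 : ℕ) : ℝ) * (2 * (n : ℝ)) ^ (2 * m) := by
          rw [Finset.sum_const, Nat.card_Icc, nsmul_eq_mul,
            show n + 1 - 2 = n - 1 from by omega]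
      _ ≤ (n : ℝ) * (2 * n) ^ (2 * m) := by
          have : ((n - 1 : ℕ) : ℝ) ≤ (n : ℝ) := by
            exact_mod_cast Nat.sub_le n 1
          exact mul_le_mul_of_nonneg_right this (by positivity)
  -- rewrite abs
  have hden : (0:ℝ) ≤ ((2 * m : ℕ) : ℝ) * ((2 * m).factorial : ℝ) * Real.sqrt v ^ (2 * m) := by
    positivity
  rw [abs_mul, abs_of_nonneg hS0, abs_div, abs_mul, abs_pow, abs_of_nonneg hden, hσ]
  have hmR : (1 : ℝ) ≤ ((2 * m : ℕ) : ℝ) := by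
    have : 1 ≤ 2 * m := by omega
    exact_mod_cast this
  have hBb := bernoulli_abs_bound m (by omega)
  calc |(bernoulli (2 * m) : ℝ)| * |t| ^ (2 * m) /
        (((2 * m : ℕ) : ℝ) * ((2 * m).factorial : ℝ) * v ^ m) *
        ∑ i ∈ Finset.Icc 2 n, (((n : ℝ) + i) ^ (2 * m) - (i : ℝ) ^ (2 * m))
      ≤ (4 * ((2 * m).factorial : ℝ) / 36 ^ m) * C ^ (2 * m) /
        (1 * ((2 * m).factorial : ℝ) * ((n : ℝ) ^ 3 / 12) ^ m) *
        ((n : ℝ) * (2 * n) ^ (2 * m)) := by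
        have habsC : 0 ≤ C := le_trans (abs_nonneg t) ht
        gcongr
    _ = 4 * n * (4 * C ^ 2 / (3 * n)) ^ m := by
        have h36 : (36 : ℝ) ^ m = 3 ^ m * 12 ^ m := by rw [← mul_pow]; norm_num
        rw [pow_mul C, pow_mul (2 * (n : ℝ)), h36]
        field_simp
        simp only [mul_pow]
        ring_nf
        have e : (n:ℝ)^(m*3) * (n:ℝ)⁻¹^m * (1/12)^m * (4/3)^m * 3^m * 12^m = n^(m*2) * 4^m := by
          rw [pow_mul' (n:ℝ) m 3, pow_mul' (n:ℝ) m 2]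
          simp only [← mul_pow]
          congr 1
          field_simp
        linear_combination (-(C^(m*2))) * e

open Real in
set_option maxHeartbeats 1000000 in
/-- The tail series $Σ_{k≥2} B_{2k} t^{2k}/(2k (2k)! σ^{2k}) Σ_{i=2}^n ((n+i)^{2k}-i^{2k})$
tends to $0$ as $n → ∞$, uniformly for $t$ in any bounded set, where
$σ^2 = n(n-1)(n+1)/6$. -/
theorem bernoulli_tail_sum_tendsto_zero (C : ℝ) (hC : 0 < C) :
    ∀ ε : ℝ, 0 < ε → ∃ N : ℕ, ∀ n : ℕ, N ≤ n → ∀ t : ℝ, |t| ≤ C →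
      |∑' k : ℕ,
          (bernoulli (2 * (k + 2)) : ℝ) * t ^ (2 * (k + 2)) /
              ((2 * (k + 2) : ℕ) * (Nat.factorial (2 * (k + 2))) *
                Real.sqrt ((n : ℝ) * ((n : ℝ) - 1) * ((n : ℝ) + 1) / 6) ^ (2 * (k + 2))) *
            ∑ i ∈ Finset.Icc 2 n,
              (((n : ℝ) + (i : ℝ)) ^ (2 * (k + 2)) - (i : ℝ) ^ (2 * (k + 2)))| < ε := by
  intro ε hε
  obtain ⟨N0, hN0⟩ := exists_nat_gt (max (8 * C ^ 2 / 3) (15 * C ^ 4 / ε))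
  refine ⟨max N0 2, fun n hn t ht => ?_⟩
  have hn2 : 2 ≤ n := le_trans (le_max_right _ _) hn
  have hnN0 : (N0 : ℝ) ≤ n := by exact_mod_cast le_trans (le_max_left _ _) hn
  have hnR : (2 : ℝ) ≤ n := by exact_mod_cast hn2
  have hnpos : (0 : ℝ) < n := by linarith
  set r : ℝ := 4 * C ^ 2 / (3 * n) with hrdef
  have hr0 : 0 ≤ r := by positivity
  have hr2 : r ≤ 1 / 2 := by
    rw [hrdef, div_le_div_iff₀ (by positivity) (by norm_num)]
    have h1 : 8 * C ^ 2 / 3 < n := lt_of_lt_of_le (lt_of_le_of_lt (le_max_left _ _) hN0) hnN0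
    nlinarith
  have hr1 : r < 1 := by linarith
  set f : ℕ → ℝ := fun k =>
    (bernoulli (2 * (k + 2)) : ℝ) * t ^ (2 * (k + 2)) /
        ((2 * (k + 2) : ℕ) * (Nat.factorial (2 * (k + 2))) *
          Real.sqrt ((n : ℝ) * ((n : ℝ) - 1) * ((n : ℝ) + 1) / 6) ^ (2 * (k + 2))) *
      ∑ i ∈ Finset.Icc 2 n,
        (((n : ℝ) + (i : ℝ)) ^ (2 * (k + 2)) - (i : ℝ) ^ (2 * (k + 2))) with hfdef
  have hterm : ∀ k : ℕ, |f k| ≤ 4 * n * r ^ (k + 2) := fun k =>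
    term_bound C hC n hn2 t ht k
  have hgsum : Summable (fun k : ℕ => 4 * (n : ℝ) * r ^ (k + 2)) := by
    have := summable_geometric_of_lt_one hr0 hr1
    exact ((this.mul_left (4 * (n : ℝ) * r ^ 2)).congr (fun k => by ring))
  have hfsum : Summable f := by
    refine Summable.of_norm_bounded hgsum fun k => ?_
    rw [Real.norm_eq_abs]; exact hterm k
  have hfabs : Summable (fun k => |f k|) := hfsum.abs
  have habs : |∑' k, f k| ≤ ∑' k : ℕ, 4 * (n : ℝ) * r ^ (k + 2) := by
    calc |∑' k, f k| ≤ ∑' k, |f k| := by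
          simpa only [Real.norm_eq_abs] using
            norm_tsum_le_tsum_norm (f := f) (by simpa only [Real.norm_eq_abs] using hfabs)
      _ ≤ ∑' k : ℕ, 4 * (n : ℝ) * r ^ (k + 2) := Summable.tsum_le_tsum hterm hfabs hgsum
  have hgeo : ∑' k : ℕ, 4 * (n : ℝ) * r ^ (k + 2) = 4 * n * r ^ 2 * (1 - r)⁻¹ := by
    rw [← tsum_geometric_of_lt_one hr0 hr1, ← tsum_mul_left]
    exact tsum_congr fun k => by ring
  have hfinal : 4 * (n : ℝ) * r ^ 2 * (1 - r)⁻¹ < ε := by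
    have hinv : (1 - r)⁻¹ ≤ 2 := by
      rw [inv_le_comm₀ (by linarith) (by norm_num)]
      linarith
    have h2 : 4 * (n : ℝ) * r ^ 2 * (1 - r)⁻¹ ≤ 8 * n * r ^ 2 := by
      have h0 : (0:ℝ) ≤ 4 * n * r ^ 2 := by positivity
      nlinarith [mul_le_mul_of_nonneg_left hinv h0]
    have hrval : 8 * (n : ℝ) * r ^ 2 = 128 * C ^ 4 / (9 * n) := by
      rw [hrdef]; field_simp; ring
    have h3 : 128 * C ^ 4 / (9 * n) < ε := by
      rw [div_lt_iff₀ (by positivity)]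
      have h4 : 15 * C ^ 4 / ε < n := lt_of_lt_of_le (lt_of_le_of_lt (le_max_right _ _) hN0) hnN0
      rw [div_lt_iff₀ hε] at h4
      nlinarith [pow_pos hC 4]
    linarith [h2, hrval ▸ h3]
  calc |∑' k, f k| ≤ ∑' k : ℕ, 4 * (n : ℝ) * r ^ (k + 2) := habs
    _ = 4 * n * r ^ 2 * (1 - r)⁻¹ := hgeo
    _ < ε := hfinal
end

section
/- For real x ≠ 0 with |x| < 2π, ln(sinh(x/2)/(x/2)) = Σ_{k=1}^{∞} B_{2k} · x^{2k}/(2k·(2k)!), where B_{2k} are the Bernoulli numbers. -/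
open Real Filter Finset Topology

lemma stepA_s11 (y : ℝ) (hy : y ≠ 0) :
    Tendsto (fun n : ℕ => ∏ j ∈ Finset.range n, (1 + y^2 / (π^2 * ((j:ℝ)+1)^2)))
      atTop (𝓝 (Real.sinh y / y)) := by
  have hπ : (π:ℝ) ≠ 0 := Real.pi_ne_zero
  have hπc : (π:ℂ) ≠ 0 := Complex.ofReal_ne_zero.mpr hπ
  have h := Complex.tendsto_euler_sin_prod ((y:ℂ) * Complex.I / π)
  have hz : (π : ℂ) * ((y:ℂ) * Complex.I / π) = (y:ℂ) * Complex.I := by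
    field_simp
  rw [hz] at h
  have hsin : Complex.sin ((y:ℂ) * Complex.I) = (Real.sinh y : ℝ) * Complex.I := by
    rw [Complex.sin_mul_I]; norm_cast
  rw [hsin] at h
  have hyI : (y:ℂ) * Complex.I ≠ 0 := by
    simp [Complex.I_ne_zero, hy]
  have h2 := h.div_const ((y:ℂ) * Complex.I)
  have hlim : ((Real.sinh y : ℝ):ℂ) * Complex.I / ((y:ℂ) * Complex.I) = ((Real.sinh y / y : ℝ):ℂ) := by
    rw [mul_div_mul_right _ _ Complex.I_ne_zero]; push_cast; ring
  rw [hlim] at h2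
  have hfac : ∀ j : ℕ, (1:ℂ) - ((y:ℂ) * Complex.I / π) ^ 2 / ((j:ℂ) + 1) ^ 2
      = ((1 + y^2 / (π^2 * ((j:ℝ)+1)^2) : ℝ) : ℂ) := by
    intro j
    have hI : ((y:ℂ) * Complex.I / π) ^ 2 = -((y:ℂ)^2 / (π:ℂ)^2) := by
      rw [div_pow, mul_pow, Complex.I_sq]; ring
    rw [hI]; push_cast; rw [neg_div, sub_neg_eq_add, div_div]
  have h3 : ∀ n : ℕ, ((y:ℂ) * Complex.I * ∏ j ∈ Finset.range n,
      ((1:ℂ) - ((y:ℂ) * Complex.I / π) ^ 2 / ((j:ℂ) + 1) ^ 2)) / ((y:ℂ) * Complex.I)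
      = ((∏ j ∈ Finset.range n, (1 + y^2 / (π^2 * ((j:ℝ)+1)^2)) : ℝ) : ℂ) := by
    intro n
    rw [mul_div_cancel_left₀ _ hyI, Finset.prod_congr rfl (fun j _ => hfac j)]
    push_cast
    rfl
  have h4 := (Complex.continuous_re.tendsto _).comp h2
  rw [Complex.ofReal_re] at h4
  refine h4.congr fun n => ?_
  simp only [Function.comp_apply]
  rw [h3 n, Complex.ofReal_re]

lemma sinh_div_pos (y : ℝ) (hy : y ≠ 0) : 0 < Real.sinh y / y := by
  rcases lt_or_gt_of_ne hy with h | h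
  · apply div_pos_iff.mpr; right
    exact ⟨by rwa [← Real.sinh_zero, Real.sinh_lt_sinh], h⟩
  · exact div_pos (by rwa [← Real.sinh_zero, Real.sinh_lt_sinh]) h

lemma summable_t (y : ℝ) : Summable (fun j : ℕ => y^2 / (π^2 * ((j:ℝ)+1)^2)) := by
  have h1 : Summable (fun j : ℕ => 1 / ((j:ℝ)+1)^2) := by
    have := (summable_nat_add_iff (f := fun n : ℕ => 1 / (n:ℝ)^2) 1).mpr
      ((Real.summable_one_div_nat_pow (p := 2)).mpr one_lt_two)
    exact this.congr fun j => by push_cast; ring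
  have := h1.mul_left (y^2 / π^2)
  exact this.congr fun j => by field_simp

lemma stepB_s11 (y : ℝ) (hy : y ≠ 0) :
    HasSum (fun j : ℕ => Real.log (1 + y^2 / (π^2 * ((j:ℝ)+1)^2)))
      (Real.log (Real.sinh y / y)) := by
  have hπ : (0:ℝ) < π := Real.pi_pos
  have htpos : ∀ j : ℕ, (0:ℝ) ≤ y^2 / (π^2 * ((j:ℝ)+1)^2) := fun j => by positivity
  have h1pos : ∀ j : ℕ, (0:ℝ) < 1 + y^2 / (π^2 * ((j:ℝ)+1)^2) := fun j => by positivity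
  have hsum : Summable (fun j : ℕ => Real.log (1 + y^2 / (π^2 * ((j:ℝ)+1)^2))) := by
    refine Summable.of_nonneg_of_le (fun j => Real.log_nonneg (by linarith [htpos j]))
      (fun j => ?_) (summable_t y)
    have := Real.log_le_sub_one_of_pos (h1pos j)
    linarith
  rw [hsum.hasSum_iff_tendsto_nat]
  have hcont := (Real.continuousAt_log (ne_of_gt (sinh_div_pos y hy))).tendsto.comp (stepA_s11 y hy)
  refine hcont.congr fun n => ?_
  simp only [Function.comp_apply]
  rw [Real.log_prod fun j _ => ne_of_gt (h1pos j)]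

lemma stepD (y : ℝ) (k : ℕ) :
    HasSum (fun j : ℕ => -((-(y^2 / (π^2 * ((j:ℝ)+1)^2)))^(k+1)/((k:ℝ)+1)))
      ((bernoulli (2*(k+1)) : ℝ) * (2*y)^(2*(k+1)) /
        ((2*(k+1) : ℕ) * Nat.factorial (2*(k+1)))) := by
  have hπ : (0:ℝ) < π := Real.pi_pos
  have hZ := hasSum_zeta_nat (k := k + 1) (Nat.succ_ne_zero k)
  have hZ' : HasSum (fun j : ℕ => 1 / ((j:ℝ)+1) ^ (2*(k+1)))
      ((-1 : ℝ) ^ (k + 1 + 1) * (2 : ℝ) ^ (2 * (k+1) - 1) * π ^ (2 * (k+1)) *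
        bernoulli (2 * (k+1)) / (Nat.factorial (2 * (k+1)) : ℝ)) := by
    have h0 : (1:ℝ) / (0:ℝ) ^ (2*(k+1)) = 0 := by
      rw [zero_pow (by omega), div_zero]
    refine ((hasSum_nat_add_iff (f := fun n : ℕ => 1 / (n:ℝ) ^ (2*(k+1))) 1).mpr ?_).congr
      fun j => by push_cast; ring
    simpa [h0] using hZ
  set c : ℝ := (-1)^k * y^(2*(k+1)) / (π^(2*(k+1)) * ((k:ℝ)+1)) with hc
  have h2 := hZ'.mul_left c
  have hpow : (2:ℝ) ^ (2 * (k+1) - 1) = 2 ^ (2*(k+1)) / 2 := by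
    rw [eq_div_iff (two_ne_zero' ℝ), ← pow_succ]
    congr 1
  have hne : ((k:ℝ)+1) ≠ 0 := by positivity
  have hfac : ((Nat.factorial (2*(k+1)) : ℕ) : ℝ) ≠ 0 := by positivity
  convert h2 using 1
  · rfl
  · funext j
    have hj : ((j:ℝ)+1) ≠ 0 := by positivity
    rw [hc]
    have ht : (-(y^2 / (π^2 * ((j:ℝ)+1)^2)))^(k+1)
        = (-1:ℝ)^(k+1) * (y^2)^(k+1) / ((π^2)^(k+1) * ((((j:ℝ)+1))^2)^(k+1)) := by
      rw [neg_pow, div_pow, mul_pow]; ring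
    rw [ht, ← pow_mul, ← pow_mul, ← pow_mul]
    field_simp
    ring
  · rw [hc, hpow]
    have : ((2*(k+1) : ℕ) : ℝ) = 2 * ((k:ℝ)+1) := by push_cast; ring
    rw [this, mul_pow (2:ℝ) y]
    have hneg1 : ((-1:ℝ))^(k*2) = 1 := by
      rw [mul_comm, pow_mul]; norm_num
    field_simp
    ring_nf
    rw [hneg1]
    ring

lemma t_le (y : ℝ) (j : ℕ) :
    y^2 / (π^2 * ((j:ℝ)+1)^2) ≤ y^2 / (π^2 * ((0:ℝ)+1)^2) := by
  have hπ : (0:ℝ) < π := Real.pi_pos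
  have hj1 : (1:ℝ) ≤ (j:ℝ) + 1 := le_add_of_nonneg_left (Nat.cast_nonneg j)
  apply div_le_div_of_nonneg_left (sq_nonneg y) (by positivity)
  have : (1:ℝ) ≤ ((j:ℝ)+1)^2 := by nlinarith
  nlinarith

lemma t0_lt (y : ℝ) (hy2 : |y| < π) : y^2 / (π^2 * ((0:ℝ)+1)^2) < 1 := by
  have hπ : (0:ℝ) < π := Real.pi_pos
  rw [div_lt_one (by positivity)]
  obtain ⟨h1, h2⟩ := abs_lt.mp hy2
  nlinarith

lemma stepC (y : ℝ) (hy2 : |y| < π) (j : ℕ) :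
    HasSum (fun k : ℕ => -((-(y^2 / (π^2 * ((j:ℝ)+1)^2)))^(k+1)/((k:ℝ)+1)))
      (Real.log (1 + y^2 / (π^2 * ((j:ℝ)+1)^2))) := by
  have hπ : (0:ℝ) < π := Real.pi_pos
  have ht0 : (0:ℝ) ≤ y^2 / (π^2 * ((j:ℝ)+1)^2) := by positivity
  have ht1 : y^2 / (π^2 * ((j:ℝ)+1)^2) < 1 := lt_of_le_of_lt (t_le y j) (t0_lt y hy2)
  have h := Real.hasSum_pow_div_log_of_abs_lt_one
    (x := -(y^2 / (π^2 * ((j:ℝ)+1)^2))) (by rwa [abs_neg, abs_of_nonneg ht0])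
  rw [sub_neg_eq_add] at h
  simpa using h.neg

lemma stepSummable (y : ℝ) (hy2 : |y| < π) :
    Summable (Function.uncurry (fun j k : ℕ =>
      -((-(y^2 / (π^2 * ((j:ℝ)+1)^2)))^(k+1)/((k:ℝ)+1)))) := by
  have hπ : (0:ℝ) < π := Real.pi_pos
  set t : ℕ → ℝ := fun j => y^2 / (π^2 * ((j:ℝ)+1)^2) with htdef
  have ht0 : ∀ j, (0:ℝ) ≤ t j := fun j => by positivity
  have hq1 : t 0 < 1 := by simpa [htdef] using t0_lt y hy2
  have hq0 : (0:ℝ) ≤ t 0 := ht0 0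
  have hb : Summable (fun p : ℕ × ℕ => t p.1 * (t 0) ^ p.2) := by
    rw [summable_prod_of_nonneg (fun p => by positivity)]
    constructor
    · exact fun j => (summable_geometric_of_lt_one hq0 hq1).mul_left (t j)
    · refine ((summable_t y).mul_right ((1 - t 0)⁻¹)).congr fun j => ?_
      have : ∑' (k:ℕ), t j * t 0 ^ k = t j * (1 - t 0)⁻¹ := by
        rw [tsum_mul_left, tsum_geometric_of_lt_one hq0 hq1]
      simpa [htdef] using this.symm
  refine Summable.of_abs (Summable.of_nonneg_of_le (fun p => abs_nonneg _)
    (fun p => ?_) hb)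
  have h1 : |Function.uncurry (fun j k : ℕ =>
      -((-(t j))^(k+1)/((k:ℝ)+1))) p| = (t p.1)^(p.2+1)/((p.2:ℝ)+1) := by
    rw [Function.uncurry]
    rw [abs_neg, abs_div, abs_pow, abs_neg, abs_of_nonneg (ht0 p.1),
      abs_of_nonneg (by positivity : (0:ℝ) ≤ (p.2:ℝ)+1)]
  rw [h1]
  calc (t p.1)^(p.2+1)/((p.2:ℝ)+1) ≤ (t p.1)^(p.2+1) := by
        apply div_le_self (by positivity)
        simp
    _ = t p.1 * (t p.1) ^ p.2 := by rw [pow_succ]; ring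
    _ ≤ t p.1 * (t 0) ^ p.2 := by
        apply mul_le_mul_of_nonneg_left _ (ht0 p.1)
        have hle : t p.1 ≤ t 0 := by simpa [htdef] using t_le y p.1
        exact pow_le_pow_left₀ (ht0 p.1) hle p.2

/-- For real $x ≠ 0$ with $|x| < 2π$,
$\ln(\sinh(x/2)/(x/2)) = Σ_{k≥1} B_{2k} x^{2k}/(2k (2k)!)$. -/
theorem log_sinh_div_eq_bernoulli_series (x : ℝ) (hx : x ≠ 0) (hx2 : |x| < 2 * Real.pi) :
    Real.log (Real.sinh (x / 2) / (x / 2))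
      = ∑' k : ℕ, (bernoulli (2 * (k + 1)) : ℝ) * x ^ (2 * (k + 1)) /
          ((2 * (k + 1) : ℕ) * Nat.factorial (2 * (k + 1))) := by
  have hπ : (0:ℝ) < π := Real.pi_pos
  set y : ℝ := x / 2 with hydef
  have hy : y ≠ 0 := div_ne_zero hx two_ne_zero
  have hy2 : |y| < π := by
    rw [hydef, abs_div, abs_two]
    linarith
  have hxy : 2 * y = x := by rw [hydef]; ring
  have hsC := stepC y hy2
  have hsD := stepD y
  have hU := stepSummable y hy2
  calc Real.log (Real.sinh y / y)
      = ∑' j : ℕ, Real.log (1 + y^2 / (π^2 * ((j:ℝ)+1)^2)) := (stepB_s11 y hy).tsum_eq.symm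
    _ = ∑' j : ℕ, ∑' k : ℕ, -((-(y^2 / (π^2 * ((j:ℝ)+1)^2)))^(k+1)/((k:ℝ)+1)) :=
        tsum_congr fun j => ((hsC j).tsum_eq).symm
    _ = ∑' k : ℕ, ∑' j : ℕ, -((-(y^2 / (π^2 * ((j:ℝ)+1)^2)))^(k+1)/((k:ℝ)+1)) :=
        (Summable.tsum_comm' hU (fun j => (hsC j).summable) (fun k => (hsD k).summable)).symm
    _ = ∑' k : ℕ, (bernoulli (2*(k+1)) : ℝ) * (2*y)^(2*(k+1)) /
          ((2*(k+1) : ℕ) * Nat.factorial (2*(k+1))) :=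
        tsum_congr fun k => (hsD k).tsum_eq
    _ = _ := by rw [hxy]
end

section
/- Let a_1,...,a_n and b_1,...,b_n be positive reals such that φ_n(q) = Π_{i=1}^n (1-q^{a_i})/(1-q^{b_i}) is a polynomial with nonnegative coefficients, and let ξ_n be the associated random variable. Then Var(ξ_n) = (1/12) Σ_{i=1}^n (a_i² - b_i²). -/
open Polynomial Finset

section QPVaux

open Filter Real Topology

/-- `f t = A*(1 + p t + P t^2) + o(t^2)` near `0` (punctured). -/
private def HE (f : ℝ → ℝ) (A p P : ℝ) : Prop :=
  Tendsto (fun t => (f t - A*(1 + p*t + P*t^2))/t^2) (𝓝[≠] (0:ℝ)) (𝓝 0)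

private lemma ev_ne : ∀ᶠ t in 𝓝[≠] (0:ℝ), t ≠ 0 := by
  filter_upwards [self_mem_nhdsWithin] with t ht using ht

private lemma tendsto_cont {f : ℝ → ℝ} {y : ℝ} (hf : Continuous f) (h0 : f 0 = y) :
    Tendsto f (𝓝[≠] (0:ℝ)) (𝓝 y) :=
  (hf.tendsto' 0 y h0).mono_left nhdsWithin_le_nhds

private lemma he_congr' {f g : ℝ → ℝ} {A p P A' p' P' : ℝ} (h : HE f A p P)
    (hfg : ∀ t : ℝ, t ≠ 0 → f t = g t) (hA : A = A') (hp : p = p') (hP : P = P') :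
    HE g A' p' P' := by
  subst hA hp hP
  exact h.congr' (by filter_upwards [ev_ne] with t ht; rw [hfg t ht])

private lemma he_tendsto {f : ℝ → ℝ} {A p P : ℝ} (hf : HE f A p P) :
    Tendsto f (𝓝[≠] (0:ℝ)) (𝓝 A) := by
  have h1 : Tendsto (fun t => ((f t - A*(1 + p*t + P*t^2))/t^2) * t^2
      + A*(1 + p*t + P*t^2)) (𝓝[≠] (0:ℝ)) (𝓝 A) := by
    have h2 : Tendsto (fun t : ℝ => t^2) (𝓝[≠] (0:ℝ)) (𝓝 0) :=
      tendsto_cont (by continuity) (by norm_num)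
    have h3 : Tendsto (fun t : ℝ => A*(1 + p*t + P*t^2)) (𝓝[≠] (0:ℝ)) (𝓝 A) :=
      tendsto_cont (by continuity) (by norm_num)
    simpa using (hf.mul h2).add h3
  refine h1.congr' ?_
  filter_upwards [ev_ne] with t ht
  field_simp; ring

private lemma he_mul {f g : ℝ → ℝ} {A p P B q Q : ℝ} (hf : HE f A p P) (hg : HE g B q Q) :
    HE (fun t => f t * g t) (A*B) (p+q) (P+Q+p*q) := by
  have h3 : Tendsto (fun t : ℝ => A*B*((p*Q+q*P)*t + P*Q*t^2)) (𝓝[≠] (0:ℝ)) (𝓝 0) :=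
    tendsto_cont (by continuity) (by norm_num)
  have hS : Tendsto (fun t : ℝ => B*(1 + q*t + Q*t^2)) (𝓝[≠] (0:ℝ)) (𝓝 B) :=
    tendsto_cont (by continuity) (by norm_num)
  have key : Tendsto (fun t => f t * ((g t - B*(1 + q*t + Q*t^2))/t^2)
      + (B*(1 + q*t + Q*t^2)) * ((f t - A*(1 + p*t + P*t^2))/t^2)
      + A*B*((p*Q+q*P)*t + P*Q*t^2)) (𝓝[≠] (0:ℝ)) (𝓝 0) := by
    have := (((he_tendsto hf).mul hg).add (hS.mul hf)).add h3
    simpa using this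
  refine key.congr' ?_
  filter_upwards [ev_ne] with t ht
  field_simp
  ring

private lemma he_inv {g : ℝ → ℝ} {B q Q : ℝ} (hg : HE g B q Q) (hB : B ≠ 0) :
    HE (fun t => (g t)⁻¹) B⁻¹ (-q) (q^2 - Q) := by
  have hgB := he_tendsto hg
  have hne : ∀ᶠ t in 𝓝[≠] (0:ℝ), g t ≠ 0 := hgB.eventually_ne hB
  have hcube : Tendsto (fun t : ℝ => -(B*((q^3 - 2*q*Q)*t + Q*(q^2-Q)*t^2))
      - (1 - q*t + (q^2-Q)*t^2) * ((g t - B*(1 + q*t + Q*t^2))/t^2))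
      (𝓝[≠] (0:ℝ)) (𝓝 0) := by
    have h1 : Tendsto (fun t : ℝ => -(B*((q^3 - 2*q*Q)*t + Q*(q^2-Q)*t^2)))
        (𝓝[≠] (0:ℝ)) (𝓝 0) := tendsto_cont (by continuity) (by norm_num)
    have h2 : Tendsto (fun t : ℝ => (1 - q*t + (q^2-Q)*t^2)) (𝓝[≠] (0:ℝ)) (𝓝 1) :=
      tendsto_cont (by continuity) (by norm_num)
    simpa using h1.sub (h2.mul hg)
  have hden : Tendsto (fun t => (g t * B)⁻¹) (𝓝[≠] (0:ℝ)) (𝓝 ((B*B)⁻¹)) :=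
    (hgB.mul tendsto_const_nhds).inv₀ (by simpa using mul_ne_zero hB hB)
  have key := hcube.mul hden
  rw [zero_mul] at key
  refine key.congr' ?_
  filter_upwards [ev_ne, hne] with t ht hgt
  field_simp
  ring

private lemma he_const_mul {f : ℝ → ℝ} {A p P : ℝ} (c : ℝ) (hf : HE f A p P) :
    HE (fun t => c * f t) (c*A) p P := by
  have key := hf.const_mul c
  rw [mul_zero] at key
  refine key.congr' ?_
  filter_upwards [ev_ne] with t ht
  field_simp

private lemma exp_taylor (n : ℕ) (hn : 0 < n) :
    Tendsto (fun x : ℝ => (Real.exp x - ∑ m ∈ Finset.range n, x^m / m.factorial)/x^(n-1))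
      (𝓝[≠] (0:ℝ)) (𝓝 0) := by
  have hb : ∀ᶠ x in 𝓝[≠] (0:ℝ),
      ‖(Real.exp x - ∑ m ∈ Finset.range n, x^m / m.factorial)/x^(n-1)‖
        ≤ (n.succ / (n.factorial * n)) * |x| := by
    have h1 : ∀ᶠ x in 𝓝[≠] (0:ℝ), |x| ≤ 1 := by
      have habs : Tendsto (fun x : ℝ => |x|) (𝓝[≠] (0:ℝ)) (𝓝 0) :=
        tendsto_cont (by continuity) (by norm_num)
      filter_upwards [habs.eventually_lt_const (by norm_num : (0:ℝ) < 1)] with x hx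
      exact hx.le
    filter_upwards [h1, ev_ne] with x hx hx0
    have hbd := Real.exp_bound hx hn
    rw [Real.norm_eq_abs, abs_div, abs_pow]
    rw [div_le_iff₀ (by positivity)]
    calc |Real.exp x - ∑ m ∈ Finset.range n, x^m / m.factorial|
        ≤ |x|^n * (n.succ / (n.factorial * n)) := hbd
      _ = (↑n.succ / (↑n.factorial * ↑n)) * |x| * |x|^(n-1) := by
          have hxp : |x|^n = |x|^(n-1) * |x| := by
            rw [← pow_succ, Nat.sub_add_cancel hn]
          rw [hxp]; ring
  have h0 : Tendsto (fun x : ℝ => (n.succ / (n.factorial * n) : ℝ) * |x|)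
      (𝓝[≠] (0:ℝ)) (𝓝 0) := tendsto_cont (by continuity) (by norm_num)
  exact squeeze_zero_norm' hb h0

private lemma exp_taylor2 :
    Tendsto (fun x : ℝ => (Real.exp x - 1 - x - x^2/2)/x^2) (𝓝[≠] (0:ℝ)) (𝓝 0) := by
  have := exp_taylor 3 (by norm_num)
  refine this.congr' ?_
  filter_upwards [ev_ne] with x hx
  norm_num [Finset.sum_range_succ, Nat.factorial]
  ring_nf

private lemma exp_taylor3 :
    Tendsto (fun x : ℝ => (Real.exp x - (1 + x + x^2/2 + x^3/6))/x^3) (𝓝[≠] (0:ℝ)) (𝓝 0) := by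
  have := exp_taylor 4 (by norm_num)
  refine this.congr' ?_
  filter_upwards [ev_ne] with x hx
  norm_num [Finset.sum_range_succ, Nat.factorial]

private lemma tendsto_mul_punctured {c : ℝ} (hc : c ≠ 0) :
    Tendsto (fun t : ℝ => c * t) (𝓝[≠] (0:ℝ)) (𝓝[≠] (0:ℝ)) := by
  apply tendsto_nhdsWithin_of_tendsto_nhds_of_eventually_within
  · exact tendsto_cont (by continuity) (by norm_num)
  · filter_upwards [ev_ne] with t ht
    exact mul_ne_zero hc ht

private lemma he_E {c : ℝ} (hc : c ≠ 0) :
    HE (fun t => (1 - Real.exp (c*t))/(-(c*t))) 1 (c/2) (c^2/6) := by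
  have hcomp := exp_taylor3.comp (tendsto_mul_punctured hc)
  have key : Tendsto (fun t : ℝ =>
      ((Real.exp (c*t) - (1 + c*t + (c*t)^2/2 + (c*t)^3/6))/(c*t)^3) * c^2)
      (𝓝[≠] (0:ℝ)) (𝓝 0) := by simpa using hcomp.mul_const (c^2)
  refine key.congr' ?_
  filter_upwards [ev_ne] with t ht
  have hct : c*t ≠ 0 := mul_ne_zero hc ht
  field_simp
  ring

private lemma he_factor {α β : ℝ} (hα : 0 < α) (hβ : 0 < β) :
    HE (fun t => (1 - Real.exp (α*t))/(1 - Real.exp (β*t))) (α/β) ((α-β)/2)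
      (α^2/6 - α*β/4 + β^2/12) := by
  have h3 := he_mul (he_E hα.ne') (he_inv (he_E hβ.ne') one_ne_zero)
  have h4 := he_const_mul (α/β) h3
  refine he_congr' h4 ?_ (by norm_num) (by ring) (by ring)
  intro t ht
  have hβt : β*t ≠ 0 := mul_ne_zero hβ.ne' ht
  have hαt : α*t ≠ 0 := mul_ne_zero hα.ne' ht
  have hden : 1 - Real.exp (β*t) ≠ 0 := by
    intro h
    exact hβt ((Real.exp_eq_one_iff _).mp (by linarith))
  field_simp

private lemma he_one : HE (fun _ : ℝ => (1:ℝ)) 1 0 0 := by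
  have : (fun t : ℝ => ((1:ℝ) - 1*(1 + 0*t + 0*t^2))/t^2) = fun _ => (0:ℝ) := by
    funext t; norm_num
  unfold HE
  rw [this]
  exact tendsto_const_nhds

private lemma he_prod {n : ℕ} (a b : Fin n → ℝ) (ha : ∀ i, 0 < a i) (hb : ∀ i, 0 < b i)
    (s : Finset (Fin n)) :
    HE (fun t => ∏ i ∈ s, (1 - Real.exp (a i * t))/(1 - Real.exp (b i * t)))
      (∏ i ∈ s, a i / b i) (∑ i ∈ s, (a i - b i)/2)
      ((∑ i ∈ s, (a i^2 - b i^2)/12 + (∑ i ∈ s, (a i - b i)/2)^2)/2) := by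
  classical
  induction s using Finset.induction_on with
  | empty =>
    simp only [Finset.prod_empty, Finset.sum_empty]
    refine he_congr' he_one (fun _ _ => rfl) rfl rfl (by norm_num)
  | @insert i s hi ih =>
    have key := he_mul (he_factor (ha i) (hb i)) ih
    refine he_congr' key ?_ ?_ ?_ ?_
    · intro t ht; rw [Finset.prod_insert hi]
    · rw [Finset.prod_insert hi]
    · rw [Finset.sum_insert hi]
    · rw [Finset.sum_insert hi, Finset.sum_insert hi]; ring

private lemma coeffs_zero {A B C : ℝ}
    (h : Tendsto (fun t : ℝ => (A + B*t + C*t^2)/t^2) (𝓝[≠] (0:ℝ)) (𝓝 0)) :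
    A = 0 ∧ B = 0 ∧ C = 0 := by
  have ht2 : Tendsto (fun t : ℝ => t^2) (𝓝[≠] (0:ℝ)) (𝓝 0) :=
    tendsto_cont (by continuity) (by norm_num)
  have ht1 : Tendsto (fun t : ℝ => t) (𝓝[≠] (0:ℝ)) (𝓝 0) :=
    tendsto_cont (by continuity) (by norm_num)
  have hA : A = 0 := by
    have h1 : Tendsto (fun t : ℝ => A + B*t + C*t^2) (𝓝[≠] (0:ℝ)) (𝓝 0) := by
      have h2 := h.mul ht2
      rw [zero_mul] at h2
      refine h2.congr' ?_
      filter_upwards [ev_ne] with t ht; field_simp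
    exact tendsto_nhds_unique (tendsto_cont (by continuity) (by norm_num)) h1
  subst hA
  have hB : B = 0 := by
    have h1 : Tendsto (fun t : ℝ => B + C*t) (𝓝[≠] (0:ℝ)) (𝓝 0) := by
      have h2 := h.mul ht1
      rw [zero_mul] at h2
      refine h2.congr' ?_
      filter_upwards [ev_ne] with t ht; field_simp; ring
    exact tendsto_nhds_unique (tendsto_cont (by continuity) (by norm_num)) h1
  subst hB
  have hC : C = 0 := by
    have h1 : Tendsto (fun _ : ℝ => C) (𝓝[≠] (0:ℝ)) (𝓝 0) := by
      refine h.congr' ?_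
      filter_upwards [ev_ne] with t ht; field_simp; ring
    exact tendsto_nhds_unique tendsto_const_nhds h1
  exact ⟨rfl, rfl, hC⟩

private lemma poly_taylor (P : Polynomial ℝ) :
    Tendsto (fun t : ℝ => (P.eval (Real.exp t) - (P.eval 1 + (derivative P).eval 1 * t
      + ((derivative (derivative P)).eval 1/2 + (derivative P).eval 1/2) * t^2))/t^2)
      (𝓝[≠] (0:ℝ)) (𝓝 0) := by
  classical
  set Q : Polynomial ℝ := P.comp (X + C 1) with hQdef
  have hQeval : ∀ x : ℝ, Q.eval x = P.eval (x+1) := by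
    intro x; simp [hQdef, Polynomial.eval_comp]
  have hQd : derivative Q = (derivative P).comp (X + C 1) := by
    simp [hQdef, Polynomial.derivative_comp]
  have hQdd : derivative (derivative Q) = (derivative (derivative P)).comp (X + C 1) := by
    rw [hQd, Polynomial.derivative_comp]; simp
  have hc0 : Q.coeff 0 = P.eval 1 := by
    rw [Polynomial.coeff_zero_eq_eval_zero, hQeval]; norm_num
  have hc1 : Q.coeff 1 = (derivative P).eval 1 := by
    have h1 := Polynomial.coeff_derivative Q 0
    have h2 : (derivative Q).coeff 0 = (derivative P).eval 1 := by
      rw [Polynomial.coeff_zero_eq_eval_zero, hQd, Polynomial.eval_comp]; norm_num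
    rw [h1] at h2
    simpa using h2
  have hc2 : Q.coeff 2 * 2 = (derivative (derivative P)).eval 1 := by
    have h1 := Polynomial.coeff_derivative (derivative Q) 0
    have h1' := Polynomial.coeff_derivative Q 1
    have h2 : (derivative (derivative Q)).coeff 0 = (derivative (derivative P)).eval 1 := by
      rw [Polynomial.coeff_zero_eq_eval_zero, hQdd, Polynomial.eval_comp]; norm_num
    rw [h1, h1'] at h2
    rw [← h2]; push_cast; ring
  obtain ⟨S, hS⟩ : (X:Polynomial ℝ)^3 ∣
      Q - (C (Q.coeff 0) + C (Q.coeff 1) * X + C (Q.coeff 2) * X^2) := by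
    rw [Polynomial.X_pow_dvd_iff]
    intro d hd
    interval_cases d <;>
      simp [Polynomial.coeff_sub, Polynomial.coeff_add, Polynomial.coeff_C,
        Polynomial.coeff_C_mul, Polynomial.coeff_X, Polynomial.coeff_X_pow]
  have heval : ∀ x : ℝ, P.eval (x+1)
      = Q.coeff 0 + Q.coeff 1 * x + Q.coeff 2 * x^2 + x^3 * S.eval x := by
    intro x
    have h3 := congrArg (Polynomial.eval x) hS
    simp only [Polynomial.eval_sub, Polynomial.eval_add, Polynomial.eval_mul,
      Polynomial.eval_pow, Polynomial.eval_C, Polynomial.eval_X] at h3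
    rw [← hQeval]
    linarith
  have hu1 : Tendsto (fun t : ℝ => (Real.exp t - 1 - t - t^2/2)/t^2) (𝓝[≠] (0:ℝ)) (𝓝 0) :=
    exp_taylor2
  have hu2 : Tendsto (fun t : ℝ => (Real.exp t - 1)/t) (𝓝[≠] (0:ℝ)) (𝓝 1) := by
    have key : Tendsto (fun t : ℝ => 1 + t/2 + t*((Real.exp t - 1 - t - t^2/2)/t^2))
        (𝓝[≠] (0:ℝ)) (𝓝 1) := by
      have hh := (tendsto_cont (f := fun t : ℝ => 1 + t/2) (by continuity)
        (by norm_num : (1:ℝ) + 0/2 = 1)).add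
        ((tendsto_cont (f := fun t : ℝ => t) (by continuity) rfl).mul hu1)
      simpa using hh
    refine key.congr' ?_
    filter_upwards [ev_ne] with t ht
    field_simp
    ring
  have hS0 : Tendsto (fun t : ℝ => S.eval (Real.exp t - 1)) (𝓝[≠] (0:ℝ))
      (𝓝 (S.eval 0)) := by
    refine tendsto_cont ?_ (by norm_num)
    exact S.continuous_aeval.comp (by continuity)
  have key : Tendsto (fun t : ℝ => Q.coeff 1 * ((Real.exp t - 1 - t - t^2/2)/t^2)
      + Q.coeff 2 * (((Real.exp t - 1)/t)^2 - 1)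
      + ((Real.exp t - 1)/t)^3 * t * S.eval (Real.exp t - 1)) (𝓝[≠] (0:ℝ)) (𝓝 0) := by
    have hmain := ((hu1.const_mul (Q.coeff 1)).add
      (((hu2.pow 2).sub_const 1).const_mul (Q.coeff 2))).add
      (((hu2.pow 3).mul (tendsto_cont (f := fun t : ℝ => t) (by continuity) rfl)).mul hS0)
    simpa using hmain
  refine key.congr' ?_
  filter_upwards [ev_ne] with t ht
  have he : P.eval (Real.exp t)
      = Q.coeff 0 + Q.coeff 1 * (Real.exp t - 1) + Q.coeff 2 * (Real.exp t - 1)^2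
        + (Real.exp t - 1)^3 * S.eval (Real.exp t - 1) := by
    have h := heval (Real.exp t - 1)
    rw [sub_add_cancel] at h
    exact h
  rw [he, ← hc0, ← hc1, ← hc2]
  field_simp
  ring

end QPVaux

/-- For $φ_n(q) = ∏_{i=1}^n (1-q^{a_i})/(1-q^{b_i})$ a polynomial with nonnegative
coefficients, the variance of the associated random variable is
$\frac1{12} Σ_{i=1}^n (a_i^2 - b_i^2)$. -/
theorem quotient_product_variance (n : ℕ) (a b : Fin n → ℝ)
    (ha : ∀ i, 0 < a i) (hb : ∀ i, 0 < b i) (P : Polynomial ℝ)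
    (hcoeff : ∀ k, 0 ≤ P.coeff k)
    (hP : ∀ q : ℝ, 0 < q → q ≠ 1 →
      P.eval q = ∏ i : Fin n, (1 - q ^ (a i)) / (1 - q ^ (b i))) :
    ((Polynomial.derivative (Polynomial.derivative P)).eval 1
          + (Polynomial.derivative P).eval 1) / P.eval 1
        - ((Polynomial.derivative P).eval 1 / P.eval 1) ^ 2
      = (∑ i : Fin n, ((a i) ^ 2 - (b i) ^ 2)) / 12 := by
  classical
  open Filter Real Topology in
  set K := ∏ i : Fin n, a i / b i with hK
  set m := ∑ i : Fin n, (a i - b i)/2 with hm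
  set v := ∑ i : Fin n, (a i^2 - b i^2)/12 with hv
  have hG := he_prod a b ha hb Finset.univ
  have hF := poly_taylor P
  have hFG : ∀ t : ℝ, t ≠ 0 → P.eval (Real.exp t)
      = ∏ i : Fin n, (1 - Real.exp (a i * t))/(1 - Real.exp (b i * t)) := by
    intro t ht
    rw [hP (Real.exp t) (Real.exp_pos t) (fun h => ht ((Real.exp_eq_one_iff t).mp h))]
    refine Finset.prod_congr rfl fun i _ => ?_
    rw [Real.rpow_def_of_pos (Real.exp_pos t), Real.rpow_def_of_pos (Real.exp_pos t),
      Real.log_exp, mul_comm t (a i), mul_comm t (b i)]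
  have hdiff : Tendsto (fun t : ℝ => ((P.eval 1 - K)
      + ((derivative P).eval 1 - K*m)*t
      + (((derivative (derivative P)).eval 1/2 + (derivative P).eval 1/2)
          - K*((v + m^2)/2))*t^2)/t^2) (𝓝[≠] (0:ℝ)) (𝓝 0) := by
    rw [← hK, ← hm, ← hv] at hG
    have hsub := hG.sub hF
    rw [sub_zero] at hsub
    refine hsub.congr' ?_
    filter_upwards [ev_ne] with t ht
    have hg := hFG t ht
    simp only [← hg, div_sub_div_same]
    congr 1
    ring
  obtain ⟨h0, h1, h2⟩ := coeffs_zero hdiff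
  have hKpos : 0 < K := Finset.prod_pos fun i _ => div_pos (ha i) (hb i)
  have e0 : P.eval 1 = K := by linarith
  have e1 : (derivative P).eval 1 = K*m := by linarith
  have e2 : (derivative (derivative P)).eval 1 + (derivative P).eval 1 = K*(v + m^2) := by
    linarith
  have e3 : (derivative (derivative P)).eval 1 = K*(v + m^2) - K*m := by linarith
  have hvrw : (∑ i : Fin n, ((a i) ^ 2 - (b i) ^ 2)) / 12 = v := by
    rw [hv, Finset.sum_div]
  rw [e0, e1, e3, hvrw]
  field_simp; ring
end

section
/- For integers m ≥ 2, n ≥ 2 and k ≥ 1, with a_i = (m-1)n + i and b_i = i for 2 ≤ i ≤ n, one has Σ_{i=2}^{n}(a_i^{2k} - b_i^{2k}) < 8^{2k} ((m-1)n)^{2k+1} and (Σ_{i=2}^{n}(a_i² - b_i²))^k > (m-1)^{2k} n^{2k} (n-1)^k, hence Σ_{i=2}^{n}(a_i^{2k} - b_i^{2k}) / (Σ_{i=2}^{n}(a_i² - b_i²))^k < (8√(2m))^{2k} n^{1-k}. -/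
open Finset

set_option maxHeartbeats 1000000 in
/-- With $a_i = (m-1)n + i$ and $b_i = i$: the three bounds used in proving the
asymptotic normality of the coefficients of the generalized q-Catalan numbers. -/
theorem generalized_qCatalan_bounds (m n k : ℕ) (hm : 2 ≤ m) (hn : 2 ≤ n) (hk : 1 ≤ k) :
    (∑ i ∈ Finset.Icc 2 n,
        ((((m : ℝ) - 1) * n + i) ^ (2 * k) - (i : ℝ) ^ (2 * k))
        < 8 ^ (2 * k) * (((m : ℝ) - 1) * n) ^ (2 * k + 1)) ∧
    ((∑ i ∈ Finset.Icc 2 n,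
        ((((m : ℝ) - 1) * n + i) ^ 2 - (i : ℝ) ^ 2)) ^ k
        > ((m : ℝ) - 1) ^ (2 * k) * (n : ℝ) ^ (2 * k) * ((n : ℝ) - 1) ^ k) ∧
    ((∑ i ∈ Finset.Icc 2 n,
        ((((m : ℝ) - 1) * n + i) ^ (2 * k) - (i : ℝ) ^ (2 * k))) /
        (∑ i ∈ Finset.Icc 2 n,
          ((((m : ℝ) - 1) * n + i) ^ 2 - (i : ℝ) ^ 2)) ^ k
        < (8 * Real.sqrt (2 * m)) ^ (2 * k) * (n : ℝ) ^ ((1 : ℤ) - (k : ℤ))) := by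
  have hm2 : (2:ℝ) ≤ (m:ℝ) := by exact_mod_cast hm
  have hn2 : (2:ℝ) ≤ (n:ℝ) := by exact_mod_cast hn
  have hnpos : (0:ℝ) < n := by linarith
  have hk0 : k ≠ 0 := by omega
  obtain ⟨e, he⟩ : ∃ e : ℝ, (m:ℝ) - 1 = e := ⟨_, rfl⟩
  obtain ⟨f, hf⟩ : ∃ f : ℝ, (n:ℝ) - 1 = f := ⟨_, rfl⟩
  rw [he, hf]
  have he1 : (1:ℝ) ≤ e := by linarith
  have hf1 : (1:ℝ) ≤ f := by linarith
  set c : ℝ := e * n with hcdef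
  have hcn : (n:ℝ) ≤ c := by nlinarith
  have hcpos : (0:ℝ) < c := by linarith
  have hcard : ((Finset.Icc 2 n).card : ℝ) = (n:ℝ) - 1 := by
    rw [Nat.card_Icc]
    have h : n + 1 - 2 = n - 1 := by omega
    rw [h, Nat.cast_sub (by omega)]
    norm_num
  -- first bound
  have h1 : ∑ i ∈ Finset.Icc 2 n, ((c + i) ^ (2*k) - (i:ℝ) ^ (2*k))
      < 8 ^ (2*k) * c ^ (2*k+1) := by
    have hstep : ∑ i ∈ Finset.Icc 2 n, ((c + i) ^ (2*k) - (i:ℝ) ^ (2*k))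
        ≤ ((n:ℝ) - 1) * (2*c) ^ (2*k) := by
      calc ∑ i ∈ Finset.Icc 2 n, ((c + i) ^ (2*k) - (i:ℝ) ^ (2*k))
          ≤ ∑ _i ∈ Finset.Icc 2 n, (2*c) ^ (2*k) := by
            apply Finset.sum_le_sum
            intro i hi
            have hin : (i:ℝ) ≤ n := by exact_mod_cast (Finset.mem_Icc.mp hi).2
            have h0i : (0:ℝ) ≤ i := Nat.cast_nonneg i
            have hp : (c + i) ^ (2*k) ≤ (2*c) ^ (2*k) :=
              pow_le_pow_left₀ (by linarith) (by linarith) _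
            have hq : (0:ℝ) ≤ (i:ℝ) ^ (2*k) := by positivity
            linarith
        _ = ((n:ℝ) - 1) * (2*c) ^ (2*k) := by
            rw [Finset.sum_const, nsmul_eq_mul, hcard]
    have h2c : (0:ℝ) < (2*c)^(2*k) := by positivity
    have hlt : ((n:ℝ)-1) * (2*c)^(2*k) < c * (2*c)^(2*k) :=
      mul_lt_mul_of_pos_right (by linarith) h2c
    have heq : c * (2*c)^(2*k) = 2^(2*k) * c^(2*k+1) := by
      rw [hcdef]; ring
    have hle : (2:ℝ)^(2*k) * c^(2*k+1) ≤ 8^(2*k) * c^(2*k+1) :=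
      mul_le_mul_of_nonneg_right (pow_le_pow_left₀ (by norm_num) (by norm_num) _)
        (by positivity)
    linarith
  -- second bound
  have h2 : f * c^2 < ∑ i ∈ Finset.Icc 2 n, ((c + i)^2 - (i:ℝ)^2) := by
    have hstep : ∑ _i ∈ Finset.Icc 2 n, (c^2 + 4*c)
        ≤ ∑ i ∈ Finset.Icc 2 n, ((c + i)^2 - (i:ℝ)^2) := by
      apply Finset.sum_le_sum
      intro i hi
      have h2i : (2:ℝ) ≤ i := by exact_mod_cast (Finset.mem_Icc.mp hi).1
      nlinarith
    rw [Finset.sum_const, nsmul_eq_mul, hcard] at hstep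
    nlinarith
  have h2' : e^(2*k) * (n:ℝ)^(2*k) * f^k
      < (∑ i ∈ Finset.Icc 2 n, ((c + i)^2 - (i:ℝ)^2))^k := by
    have hbase : (0:ℝ) ≤ f * c^2 := by positivity
    have hp := pow_lt_pow_left₀ h2 hbase hk0
    have heq : (f * c^2)^k = e^(2*k) * (n:ℝ)^(2*k) * f^k := by
      rw [hcdef]; ring
    rw [heq] at hp
    exact hp
  refine ⟨h1, h2', ?_⟩
  -- third bound
  have hDpos : (0:ℝ) < e^(2*k) * (n:ℝ)^(2*k) * f^k := by positivity
  have hS2k_pos : (0:ℝ) < (∑ i ∈ Finset.Icc 2 n, ((c + i)^2 - (i:ℝ)^2))^k :=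
    lt_trans hDpos h2'
  have hnk : (0:ℝ) < (n:ℝ)^k := pow_pos hnpos k
  have hkey : e * (n:ℝ)^k < (2*(m:ℝ)*f)^k := by
    have hmn : (m:ℝ)*n ≤ 2*(m:ℝ)*f := by nlinarith
    have ha : ((m:ℝ)*n)^k ≤ (2*(m:ℝ)*f)^k :=
      pow_le_pow_left₀ (by positivity) hmn k
    have hb : (m:ℝ) * (n:ℝ)^k ≤ ((m:ℝ))^k * (n:ℝ)^k :=
      mul_le_mul_of_nonneg_right (le_self_pow₀ (by linarith) hk0) (by positivity)
    have hc' : ((m:ℝ)*n)^k = (m:ℝ)^k * (n:ℝ)^k := mul_pow _ _ _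
    nlinarith
  have hspos : (0:ℝ) < Real.sqrt (2*(m:ℝ)) :=
    Real.sqrt_pos.mpr (by nlinarith)
  have hA : (8*Real.sqrt (2*(m:ℝ)))^(2*k) = 8^(2*k) * (2*(m:ℝ))^k := by
    rw [mul_pow]
    congr 1
    rw [pow_mul, Real.sq_sqrt (by nlinarith : (0:ℝ) ≤ 2*(m:ℝ))]
  have hz : (n:ℝ)^((1:ℤ)-(k:ℤ)) = (n:ℝ) / (n:ℝ)^k := by
    rw [zpow_sub₀ (ne_of_gt hnpos), zpow_one, zpow_natCast]
  have hRHSpos : (0:ℝ) < (8 * Real.sqrt (2*(m:ℝ)))^(2*k) * (n:ℝ)^((1:ℤ)-(k:ℤ)) := by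
    rw [hA, hz]
    positivity
  have hEq : ((8*Real.sqrt (2*(m:ℝ)))^(2*k) * (n:ℝ)^((1:ℤ)-(k:ℤ)))
        * (e^(2*k) * (n:ℝ)^(2*k) * f^k)
      = (8^(2*k) * (2*(m:ℝ))^k * (n:ℝ) * (e^(2*k) * (n:ℝ)^(2*k) * f^k))
        / (n:ℝ)^k := by
    rw [hA, hz]
    field_simp
    try ring
  have hRD : 8^(2*k) * c^(2*k+1)
      < ((8*Real.sqrt (2*(m:ℝ)))^(2*k) * (n:ℝ)^((1:ℤ)-(k:ℤ)))
        * (e^(2*k) * (n:ℝ)^(2*k) * f^k) := by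
    rw [hEq, lt_div_iff₀ hnk]
    have hApos : (0:ℝ) < 8^(2*k) * e^(2*k) * (n:ℝ)^(2*k+1) := by positivity
    calc 8^(2*k) * c^(2*k+1) * (n:ℝ)^k
        = (8^(2*k) * e^(2*k) * (n:ℝ)^(2*k+1)) * (e * (n:ℝ)^k) := by
          rw [hcdef]; ring
      _ < (8^(2*k) * e^(2*k) * (n:ℝ)^(2*k+1)) * (2*(m:ℝ)*f)^k :=
          mul_lt_mul_of_pos_left hkey hApos
      _ = 8^(2*k) * (2*(m:ℝ))^k * (n:ℝ) * (e^(2*k) * (n:ℝ)^(2*k) * f^k) := by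
          ring
  rw [div_lt_iff₀ hS2k_pos]
  have hmono := mul_lt_mul_of_pos_left h2' hRHSpos
  calc ∑ i ∈ Finset.Icc 2 n, ((c + i) ^ (2*k) - (i:ℝ) ^ (2*k))
      < 8^(2*k) * c^(2*k+1) := h1
    _ < ((8*Real.sqrt (2*(m:ℝ)))^(2*k) * (n:ℝ)^((1:ℤ)-(k:ℤ)))
        * (e^(2*k) * (n:ℝ)^(2*k) * f^k) := hRD
    _ < ((8*Real.sqrt (2*(m:ℝ)))^(2*k) * (n:ℝ)^((1:ℤ)-(k:ℤ)))
        * (∑ i ∈ Finset.Icc 2 n, ((c + i)^2 - (i:ℝ)^2))^k := hmono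
    _ = (8*Real.sqrt (2*(m:ℝ)))^(2*k) * (n:ℝ)^((1:ℤ)-(k:ℤ))
        * (∑ i ∈ Finset.Icc 2 n, ((c + i)^2 - (i:ℝ)^2))^k := by ring
end
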